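/- Let π be a probability density on (0,∞) with ∫₀^∞ e^{κx}π(x)dx < ∞ for κ > 1, and let g: [0,1] → ℝ be bounded with support contained in an interval of length b ≤ 1. Define H_g(−a) := ∫_{−a}^∞ g(e^{−x−a}) π(x) dx for a < 0. Then, with β(y) := y^{−1}π(−log y) assumed bounded by B, one has |H_g(−a)| ≤ ‖g‖_∞^{} · B^{1/2} · b^{1/2} · e^{a(1+κ)/2} · (∫₀^∞ e^{κx}π(x)dx)^{1/2} for all a < 0. -/

import Mathlib

open MeasureTheory Set

/-- Bound on `H_g(-a)` for `a < 0`: with `π` a probability density on `(0,∞)` having an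
exponential moment of order `κ > 1`, `g` bounded by `M` with support in `[0,1]` contained
in an interval of length `b ≤ 1`, and `β(y) = y⁻¹ π(-log y) ≤ B` on `(0,1)`, one has
`|H_g(-a)| ≤ M √B √b e^{a(1+κ)/2} (∫₀^∞ e^{κx} π(x) dx)^{1/2}`. -/
theorem stmt_16 (π : ℝ → ℝ) (hmeas : Measurable π) (hpos : ∀ x, 0 ≤ π x)
    (hdens : ∫ x in Ioi (0:ℝ), π x = 1)
    (κ : ℝ) (hκ : 1 < κ)
    (hexp : IntegrableOn (fun x => Real.exp (κ * x) * π x) (Ioi 0))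
    (g : ℝ → ℝ) (hg : Measurable g)
    (M : ℝ) (hM : 0 ≤ M) (hgbdd : ∀ y, |g y| ≤ M)
    (b c₀ : ℝ) (hb0 : 0 ≤ b) (hb1 : b ≤ 1)
    (hsupp : ∀ y, y ∉ Icc c₀ (c₀ + b) → g y = 0)
    (hsupp01 : ∀ y, y ∉ Icc (0:ℝ) 1 → g y = 0)
    (B : ℝ) (hB : 0 ≤ B)
    (hβ : ∀ y ∈ Ioo (0:ℝ) 1, y⁻¹ * π (-Real.log y) ≤ B) :
    ∀ a : ℝ, a < 0 →
      |∫ x in Ioi (-a), g (Real.exp (-x - a)) * π x| ≤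
        M * Real.sqrt B * Real.sqrt b * Real.exp (a * (1 + κ) / 2) *
          Real.sqrt (∫ x in Ioi (0:ℝ), Real.exp (κ * x) * π x) := by
  intro a ha
  have hna : (0:ℝ) < -a := by linarith
  have hsub : Ioi (-a) ⊆ Ioi (0:ℝ) := Ioi_subset_Ioi (le_of_lt hna)
  -- integrability of π on (0,∞)
  have hπ0 : IntegrableOn π (Ioi (0:ℝ)) := by
    by_contra h
    rw [integral_undef h] at hdens
    norm_num at hdens
  have hπa : IntegrableOn π (Ioi (-a)) := hπ0.mono_set hsub
  -- measurability helpers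
  have hφm : Measurable fun x : ℝ => Real.exp (-x - a) :=
    (Real.measurable_exp.comp ((measurable_id.neg).sub_const a))
  have hgc : Measurable fun x : ℝ => g (Real.exp (-x - a)) := hg.comp hφm
  have hsqrtπ : Measurable fun x : ℝ => Real.sqrt (π x) :=
    Real.continuous_sqrt.measurable.comp hmeas
  -- the squared function is integrable
  have hsqint : IntegrableOn (fun x => g (Real.exp (-x - a)) ^ 2 * π x) (Ioi (-a)) := by
    refine Integrable.mono (hπa.const_mul (M ^ 2)) ((hgc.pow_const 2).mul hmeas).aestronglyMeasurable ?_
    refine Filter.Eventually.of_forall fun x => ?_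
    have h1 : |g (Real.exp (-x - a))| ≤ M := hgbdd _
    have h2 : 0 ≤ π x := hpos x
    have h3 : g (Real.exp (-x - a)) ^ 2 ≤ M ^ 2 := by
      have := sq_abs (g (Real.exp (-x - a)))
      nlinarith [abs_nonneg (g (Real.exp (-x - a)))]
    rw [Real.norm_eq_abs, Real.norm_eq_abs, abs_of_nonneg (mul_nonneg (sq_nonneg _) h2),
      abs_of_nonneg (mul_nonneg (sq_nonneg M) h2)]
    exact mul_le_mul_of_nonneg_right h3 h2
  -- MemLp facts for Cauchy-Schwarz
  have hofReal2 : (ENNReal.ofReal (2:ℝ)) = 2 := by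
    rw [ENNReal.ofReal_ofNat]
  have hmem1 : MemLp (fun x => |g (Real.exp (-x - a))| * Real.sqrt (π x)) (ENNReal.ofReal 2)
      (volume.restrict (Ioi (-a))) := by
    rw [hofReal2]
    refine (memLp_two_iff_integrable_sq
      (hgc.abs.mul hsqrtπ).aestronglyMeasurable).2 ?_
    have heq : (fun x => (|g (Real.exp (-x - a))| * Real.sqrt (π x)) ^ 2)
        = fun x => g (Real.exp (-x - a)) ^ 2 * π x := by
      funext x
      rw [mul_pow, Real.sq_sqrt (hpos x), sq_abs]
    show Integrable (fun x => (|g (Real.exp (-x - a))| * Real.sqrt (π x)) ^ 2) _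
    rw [heq]
    exact hsqint
  have hmem2 : MemLp (fun x => Real.sqrt (π x)) (ENNReal.ofReal 2)
      (volume.restrict (Ioi (-a))) := by
    rw [hofReal2]
    refine (memLp_two_iff_integrable_sq hsqrtπ.aestronglyMeasurable).2 ?_
    have heq : (fun x => Real.sqrt (π x) ^ 2) = π := by
      funext x; exact Real.sq_sqrt (hpos x)
    rw [heq]; exact hπa
  -- Cauchy-Schwarz
  have hpq : Real.HolderConjugate 2 2 := Real.HolderConjugate.two_two
  have hCS := MeasureTheory.integral_mul_le_Lp_mul_Lq_of_nonneg (μ := volume.restrict (Ioi (-a)))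
    hpq (Filter.Eventually.of_forall fun x => mul_nonneg (abs_nonneg _) (Real.sqrt_nonneg _))
    (Filter.Eventually.of_forall fun x => Real.sqrt_nonneg _) hmem1 hmem2
  -- rewrite products
  have hprod : (fun x => (|g (Real.exp (-x - a))| * Real.sqrt (π x)) * Real.sqrt (π x))
      = fun x => |g (Real.exp (-x - a)) * π x| := by
    funext x
    rw [mul_assoc, Real.mul_self_sqrt (hpos x), abs_mul, abs_of_nonneg (hpos x)]
  have hsq1 : (fun x => (|g (Real.exp (-x - a))| * Real.sqrt (π x)) ^ (2:ℝ))
      = fun x => g (Real.exp (-x - a)) ^ 2 * π x := by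
    funext x
    rw [show ((2:ℝ)) = ((2:ℕ):ℝ) by norm_num, Real.rpow_natCast]
    rw [mul_pow, Real.sq_sqrt (hpos x), sq_abs]
  have hsq2 : (fun x => Real.sqrt (π x) ^ (2:ℝ)) = π := by
    funext x
    rw [show ((2:ℝ)) = ((2:ℕ):ℝ) by norm_num, Real.rpow_natCast]
    exact Real.sq_sqrt (hpos x)
  simp only [hprod, hsq1, hsq2] at hCS
  -- change of variables for the first factor
  set S := ∫ x in Ioi (-a), g (Real.exp (-x - a)) ^ 2 * π x with hSdef
  set T := ∫ x in Ioi (-a), π x with hTdef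
  set I := ∫ x in Ioi (0:ℝ), Real.exp (κ * x) * π x with hIdef
  have hS0 : 0 ≤ S := setIntegral_nonneg measurableSet_Ioi
    (fun x _ => mul_nonneg (sq_nonneg _) (hpos x))
  have hT0 : 0 ≤ T := setIntegral_nonneg measurableSet_Ioi (fun x _ => hpos x)
  have hI0 : 0 ≤ I := setIntegral_nonneg measurableSet_Ioi
    (fun x _ => mul_nonneg (Real.exp_pos _).le (hpos x))
  -- image of Ioi (-a) under x ↦ exp (-x - a)
  have hderiv : ∀ x ∈ Ioi (-a), HasDerivWithinAt (fun x : ℝ => Real.exp (-x - a))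
      (-Real.exp (-x - a)) (Ioi (-a)) x := by
    intro x _
    have h1 : HasDerivAt (fun x : ℝ => -x - a) (-1) x := by
      simpa using ((hasDerivAt_id x).neg.sub_const a)
    have h2 := (Real.hasDerivAt_exp (-x - a)).comp x h1
    simpa [mul_comm, Function.comp_def] using h2.hasDerivWithinAt
  have hinj : InjOn (fun x : ℝ => Real.exp (-x - a)) (Ioi (-a)) := by
    intro x _ y _ h
    have := Real.exp_injective h
    linarith [this]
  have himg : (fun x : ℝ => Real.exp (-x - a)) '' (Ioi (-a)) = Ioo 0 1 := by
    ext y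
    constructor
    · rintro ⟨x, hx, rfl⟩
      refine ⟨Real.exp_pos _, ?_⟩
      have : -x - a < 0 := by simp only [mem_Ioi] at hx; linarith
      calc Real.exp (-x - a) < Real.exp 0 := Real.exp_lt_exp.2 this
        _ = 1 := Real.exp_zero
    · rintro ⟨hy0, hy1⟩
      refine ⟨-Real.log y - a, ?_, ?_⟩
      · simp only [mem_Ioi]
        have : Real.log y < 0 := Real.log_neg hy0 hy1
        linarith
      · show Real.exp (-(-Real.log y - a) - a) = y
        rw [show -(-Real.log y - a) - a = Real.log y by ring, Real.exp_log hy0]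
  -- the substituted integrand
  have hsubst : S = ∫ y in Ioo (0:ℝ) 1, g y ^ 2 * (π (-Real.log y - a) * y⁻¹) := by
    rw [hSdef, ← himg,
      integral_image_eq_integral_abs_deriv_smul measurableSet_Ioi hderiv hinj]
    refine setIntegral_congr_fun measurableSet_Ioi fun x _ => ?_
    have he : Real.exp (-x - a) ≠ 0 := Real.exp_ne_zero _
    have hlog : -Real.log (Real.exp (-x - a)) - a = x := by
      rw [Real.log_exp]; ring
    simp only [smul_eq_mul, hlog, abs_neg, abs_of_pos (Real.exp_pos (-x - a))]
    field_simp
  -- bound the substituted integrand pointwise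
  have hGbound : ∀ y ∈ Ioo (0:ℝ) 1, g y ^ 2 * (π (-Real.log y - a) * y⁻¹) ≤
      (Icc c₀ (c₀ + b)).indicator (fun _ => M ^ 2 * (B * Real.exp a)) y := by
    intro y hy
    obtain ⟨hy0, hy1⟩ := hy
    by_cases hmem : y ∈ Icc c₀ (c₀ + b)
    · rw [indicator_of_mem hmem]
      have hz : y * Real.exp a ∈ Ioo (0:ℝ) 1 := by
        constructor
        · positivity
        · calc y * Real.exp a
              < 1 * 1 := mul_lt_mul' (le_of_lt hy1) (Real.exp_lt_one_iff.mpr ha)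
                (Real.exp_pos a).le one_pos
          _ = 1 := by norm_num
      have hβz := hβ _ hz
      have hlogz : -Real.log (y * Real.exp a) = -Real.log y - a := by
        rw [Real.log_mul (ne_of_gt hy0) (Real.exp_ne_zero a), Real.log_exp]; ring
      rw [hlogz] at hβz
      have hinvz : (y * Real.exp a)⁻¹ = y⁻¹ * Real.exp (-a) := by
        rw [mul_inv, Real.exp_neg]
      rw [hinvz] at hβz
      -- hβz : y⁻¹ * exp(-a) * π (-log y - a) ≤ B
      have hbd : π (-Real.log y - a) * y⁻¹ ≤ B * Real.exp a := by
        have hea : 0 < Real.exp a := Real.exp_pos a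
        have := mul_le_mul_of_nonneg_right hβz hea.le
        rw [mul_assoc, mul_comm (π (-Real.log y - a)) (Real.exp a)] at this
        calc π (-Real.log y - a) * y⁻¹
            = (y⁻¹ * Real.exp (-a) * π (-Real.log y - a)) * Real.exp a := by
              rw [Real.exp_neg]; field_simp
          _ ≤ B * Real.exp a := mul_le_mul_of_nonneg_right hβz hea.le
      have hg2 : g y ^ 2 ≤ M ^ 2 := by
        have h1 := hgbdd y
        nlinarith [abs_nonneg (g y), sq_abs (g y)]
      have hπnn : 0 ≤ π (-Real.log y - a) * y⁻¹ :=
        mul_nonneg (hpos _) (inv_nonneg.2 hy0.le)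
      exact mul_le_mul hg2 hbd hπnn (by positivity)
    · rw [indicator_of_notMem hmem, hsupp y hmem]
      norm_num
  -- integrability of the substituted integrand
  have hGint : IntegrableOn (fun y => g y ^ 2 * (π (-Real.log y - a) * y⁻¹)) (Ioo (0:ℝ) 1) := by
    rw [← himg,
      integrableOn_image_iff_integrableOn_abs_deriv_smul measurableSet_Ioi hderiv hinj]
    have heq : (fun x => |(-Real.exp (-x - a))| •
        (g (Real.exp (-x - a)) ^ 2 * (π (-Real.log (Real.exp (-x - a)) - a) * (Real.exp (-x - a))⁻¹)))
        = fun x => g (Real.exp (-x - a)) ^ 2 * π x := by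
      funext x
      have hlog : -Real.log (Real.exp (-x - a)) - a = x := by
        rw [Real.log_exp]; ring
      simp only [smul_eq_mul, hlog, abs_neg, abs_of_pos (Real.exp_pos (-x - a))]
      field_simp
    rw [heq]
    exact hsqint
  have hindint : IntegrableOn ((Icc c₀ (c₀ + b)).indicator (fun _ => M ^ 2 * (B * Real.exp a)))
      (Ioo (0:ℝ) 1) := by
    apply Integrable.indicator _ measurableSet_Icc
    exact integrableOn_const (by simp [Real.volume_Ioo])
  -- bound S
  have hS : S ≤ M ^ 2 * (B * Real.exp a) * b := by
    rw [hsubst]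
    calc ∫ y in Ioo (0:ℝ) 1, g y ^ 2 * (π (-Real.log y - a) * y⁻¹)
        ≤ ∫ y in Ioo (0:ℝ) 1, (Icc c₀ (c₀ + b)).indicator (fun _ => M ^ 2 * (B * Real.exp a)) y :=
          setIntegral_mono_on hGint hindint measurableSet_Ioo hGbound
      _ = ∫ y in Ioo (0:ℝ) 1 ∩ Icc c₀ (c₀ + b), (M ^ 2 * (B * Real.exp a)) :=
          setIntegral_indicator measurableSet_Icc
      _ = (volume (Ioo (0:ℝ) 1 ∩ Icc c₀ (c₀ + b))).toReal * (M ^ 2 * (B * Real.exp a)) := by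
          rw [setIntegral_const, smul_eq_mul]; rfl
      _ ≤ b * (M ^ 2 * (B * Real.exp a)) := by
          apply mul_le_mul_of_nonneg_right _ (by positivity)
          have h1 : volume (Ioo (0:ℝ) 1 ∩ Icc c₀ (c₀ + b)) ≤ volume (Icc c₀ (c₀ + b)) :=
            measure_mono inter_subset_right
          rw [Real.volume_Icc] at h1
          have h2 : c₀ + b - c₀ = b := by ring
          rw [h2] at h1
          calc (volume (Ioo (0:ℝ) 1 ∩ Icc c₀ (c₀ + b))).toReal
              ≤ (ENNReal.ofReal b).toReal := ENNReal.toReal_mono ENNReal.ofReal_ne_top h1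
            _ = b := ENNReal.toReal_ofReal hb0
      _ = M ^ 2 * (B * Real.exp a) * b := by ring
  -- bound T
  have hexpa : IntegrableOn (fun x => Real.exp (κ * x) * π x) (Ioi (-a)) := hexp.mono_set hsub
  have hT : T ≤ Real.exp (κ * a) * I := by
    rw [hTdef]
    calc ∫ x in Ioi (-a), π x
        ≤ ∫ x in Ioi (-a), Real.exp (κ * a) * (Real.exp (κ * x) * π x) := by
          apply setIntegral_mono_on hπa (hexpa.const_mul _) measurableSet_Ioi
          intro x hx
          simp only [mem_Ioi] at hx
          have h1 : (1:ℝ) ≤ Real.exp (κ * a) * Real.exp (κ * x) := by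
            rw [← Real.exp_add]
            apply Real.one_le_exp
            nlinarith
          nlinarith [hpos x]
      _ = Real.exp (κ * a) * ∫ x in Ioi (-a), Real.exp (κ * x) * π x := MeasureTheory.integral_const_mul _ _
      _ ≤ Real.exp (κ * a) * I := by
          apply mul_le_mul_of_nonneg_left _ (Real.exp_pos _).le
          apply setIntegral_mono_set hexp
          · exact Filter.Eventually.of_forall fun x => mul_nonneg (Real.exp_pos _).le (hpos x)
          · exact HasSubset.Subset.eventuallyLE hsub
  -- put everything together
  have habs : |∫ x in Ioi (-a), g (Real.exp (-x - a)) * π x| ≤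
      ∫ x in Ioi (-a), |g (Real.exp (-x - a)) * π x| := by
    have := MeasureTheory.norm_integral_le_integral_norm (μ := volume.restrict (Ioi (-a)))
      (fun x => g (Real.exp (-x - a)) * π x)
    simpa only [Real.norm_eq_abs] using this
  have hrw : S ^ ((1:ℝ)/2) * T ^ ((1:ℝ)/2) ≤
      (M ^ 2 * (B * Real.exp a) * b) ^ ((1:ℝ)/2) * (Real.exp (κ * a) * I) ^ ((1:ℝ)/2) := by
    apply mul_le_mul
    · exact Real.rpow_le_rpow hS0 hS (by norm_num)
    · exact Real.rpow_le_rpow hT0 hT (by norm_num)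
    · positivity
    · positivity
  have hfinal : (M ^ 2 * (B * Real.exp a) * b) ^ ((1:ℝ)/2) * (Real.exp (κ * a) * I) ^ ((1:ℝ)/2)
      = M * Real.sqrt B * Real.sqrt b * Real.exp (a * (1 + κ) / 2) * Real.sqrt I := by
    have e1 : Real.sqrt (Real.exp a) = Real.exp (a / 2) := by
      rw [show Real.exp a = Real.exp (a / 2) ^ 2 by rw [sq, ← Real.exp_add]; ring_nf]
      exact Real.sqrt_sq (Real.exp_nonneg _)
    have e2 : Real.sqrt (Real.exp (κ * a)) = Real.exp (κ * a / 2) := by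
      rw [show Real.exp (κ * a) = Real.exp (κ * a / 2) ^ 2 by rw [sq, ← Real.exp_add]; ring_nf]
      exact Real.sqrt_sq (Real.exp_nonneg _)
    have e3 : Real.exp (a / 2) * Real.exp (κ * a / 2) = Real.exp (a * (1 + κ) / 2) := by
      rw [← Real.exp_add]; ring_nf
    rw [← Real.sqrt_eq_rpow, ← Real.sqrt_eq_rpow,
      Real.sqrt_mul (by positivity : (0:ℝ) ≤ M ^ 2 * (B * Real.exp a)) b,
      Real.sqrt_mul (by positivity : (0:ℝ) ≤ M ^ 2) (B * Real.exp a),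
      Real.sqrt_mul hB (Real.exp a),
      Real.sqrt_mul (Real.exp_nonneg _) I,
      Real.sqrt_sq hM, e1, e2, ← e3]
    ring
  calc |∫ x in Ioi (-a), g (Real.exp (-x - a)) * π x|
      ≤ ∫ x in Ioi (-a), |g (Real.exp (-x - a)) * π x| := habs
    _ ≤ S ^ ((1:ℝ)/2) * T ^ ((1:ℝ)/2) := hCS
    _ ≤ (M ^ 2 * (B * Real.exp a) * b) ^ ((1:ℝ)/2) * (Real.exp (κ * a) * I) ^ ((1:ℝ)/2) := hrw
    _ = _ := hfinal
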